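/- The partial transpose (with respect to the first subsystem) of the Bell decomposable state ρ = Σᵢ pᵢ |ψᵢ⟩⟨ψᵢ| is positive semidefinite if and only if the three inequalities (p₁+p₂)(p₃+p₄) ≥ (p₅−p₆)², (p₃+p₄)(p₅+p₆) ≥ (p₁−p₂)², and (p₅+p₆)(p₁+p₂) ≥ (p₃−p₄)² hold. -/

import Mathlib

noncomputable section
open Matrix ComplexOrder

/-- The standard product basis vector `|ij⟩` of `ℂ²⊗ℂ³ ≅ ℂ⁶`, as a function. -/
def ket (i : Fin 2) (j : Fin 3) : Fin 2 × Fin 3 → ℂ := fun x => if x = (i, j) then 1 else 0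

/-- The six Bell states of `ℂ²⊗ℂ³`, as functions. -/
def bell : Fin 6 → (Fin 2 × Fin 3 → ℂ)
  | 0 => (Real.sqrt 2 : ℂ)⁻¹ • (ket 0 0 + ket 1 1)
  | 1 => (Real.sqrt 2 : ℂ)⁻¹ • (ket 0 0 - ket 1 1)
  | 2 => (Real.sqrt 2 : ℂ)⁻¹ • (ket 0 1 + ket 1 2)
  | 3 => (Real.sqrt 2 : ℂ)⁻¹ • (ket 0 1 - ket 1 2)
  | 4 => (Real.sqrt 2 : ℂ)⁻¹ • (ket 0 2 + ket 1 0)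
  | 5 => (Real.sqrt 2 : ℂ)⁻¹ • (ket 0 2 - ket 1 0)

/-- Outer product `|v⟩⟨w|` as a matrix. -/
def outer (v w : Fin 2 × Fin 3 → ℂ) : Matrix (Fin 2 × Fin 3) (Fin 2 × Fin 3) ℂ :=
  Matrix.vecMulVec v (star w)

/-- The Bell decomposable state `ρ = Σᵢ pᵢ |ψᵢ⟩⟨ψᵢ|`. -/
def ρBD (p : Fin 6 → ℝ) : Matrix (Fin 2 × Fin 3) (Fin 2 × Fin 3) ℂ :=
  ∑ i, (p i : ℂ) • outer (bell i) (bell i)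

/-- Partial transpose with respect to the first subsystem:
`⟨ij|ρ^{T₁}|kl⟩ = ⟨kj|ρ|il⟩`. -/
def partialTranspose (M : Matrix (Fin 2 × Fin 3) (Fin 2 × Fin 3) ℂ) :
    Matrix (Fin 2 × Fin 3) (Fin 2 × Fin 3) ℂ :=
  fun x y => M (y.1, x.2) (x.1, y.2)

set_option maxHeartbeats 2000000 in
lemma quadC (p : Fin 6 → ℝ) (x : Fin 2 × Fin 3 → ℂ) :
    star x ⬝ᵥ (partialTranspose (ρBD p)) *ᵥ x =
    ((p 0 + p 1)/2 : ℝ) * (starRingEnd ℂ (x (0,0)) * x (0,0))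
      + ((p 2 + p 3)/2 : ℝ) * (starRingEnd ℂ (x (1,2)) * x (1,2))
      + ((p 4 - p 5)/2 : ℝ) * (starRingEnd ℂ (x (0,0)) * x (1,2) + starRingEnd ℂ (x (1,2)) * x (0,0))
      + (((p 2 + p 3)/2 : ℝ) * (starRingEnd ℂ (x (0,1)) * x (0,1))
      + ((p 4 + p 5)/2 : ℝ) * (starRingEnd ℂ (x (1,0)) * x (1,0))
      + ((p 0 - p 1)/2 : ℝ) * (starRingEnd ℂ (x (0,1)) * x (1,0) + starRingEnd ℂ (x (1,0)) * x (0,1)))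
      + (((p 4 + p 5)/2 : ℝ) * (starRingEnd ℂ (x (0,2)) * x (0,2))
      + ((p 0 + p 1)/2 : ℝ) * (starRingEnd ℂ (x (1,1)) * x (1,1))
      + ((p 2 - p 3)/2 : ℝ) * (starRingEnd ℂ (x (0,2)) * x (1,1) + starRingEnd ℂ (x (1,1)) * x (0,2))) := by
  have h2 : ((Real.sqrt 2 : ℝ) : ℂ)⁻¹ ^ 2 = (2:ℂ)⁻¹ := by
    rw [inv_pow, ← Complex.ofReal_pow, Real.sq_sqrt (by norm_num : (0:ℝ) ≤ 2)]
    norm_num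
  simp only [dotProduct, mulVec, Fintype.sum_prod_type, Fin.sum_univ_two, Fin.sum_univ_three,
    partialTranspose, ρBD, Matrix.sum_apply, Fin.sum_univ_six, Matrix.smul_apply, outer,
    vecMulVec_apply, bell, ket, Pi.smul_apply, Pi.add_apply, Pi.sub_apply, Prod.mk.injEq,
    smul_eq_mul, Pi.star_apply]
  norm_num [Fin.ext_iff, Prod.ext_iff]
  ring_nf
  rw [h2]
  ring_nf

lemma quadR (p : Fin 6 → ℝ) (x : Fin 2 × Fin 3 → ℂ) :
    star x ⬝ᵥ (partialTranspose (ρBD p)) *ᵥ x =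
    (((p 0 + p 1)/2 * Complex.normSq (x (0,0)) + (p 2 + p 3)/2 * Complex.normSq (x (1,2))
        + (p 4 - p 5) * ((x (0,0)).re * (x (1,2)).re + (x (0,0)).im * (x (1,2)).im)
      + ((p 2 + p 3)/2 * Complex.normSq (x (0,1)) + (p 4 + p 5)/2 * Complex.normSq (x (1,0))
        + (p 0 - p 1) * ((x (0,1)).re * (x (1,0)).re + (x (0,1)).im * (x (1,0)).im))
      + ((p 4 + p 5)/2 * Complex.normSq (x (0,2)) + (p 0 + p 1)/2 * Complex.normSq (x (1,1))
        + (p 2 - p 3) * ((x (0,2)).re * (x (1,1)).re + (x (0,2)).im * (x (1,1)).im))) : ℝ) := by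
  rw [quadC]
  simp only [Complex.ext_iff, Complex.ofReal_re, Complex.ofReal_im, Complex.add_re, Complex.add_im,
    Complex.mul_re, Complex.mul_im, Complex.ofReal_def, Complex.conj_re, Complex.conj_im,
    Complex.normSq_apply]
  constructor <;> ring

lemma pt_herm (p : Fin 6 → ℝ) : (partialTranspose (ρBD p)).IsHermitian := by
  have h : (ρBD p).IsHermitian := by
    ext x y
    rw [Matrix.conjTranspose_apply]
    simp only [ρBD, Matrix.sum_apply, Matrix.smul_apply, smul_eq_mul, star_sum, star_mul',
      outer, vecMulVec_apply, Pi.star_apply, Complex.star_def, Complex.conj_ofReal,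
      Complex.conj_conj]
    exact Finset.sum_congr rfl fun i _ => by ring
  ext x y
  rw [Matrix.conjTranspose_apply]
  show star (partialTranspose (ρBD p) y x) = _
  rw [partialTranspose, partialTranspose]
  exact h.apply _ _

lemma ip_sq_le (u v : ℂ) : (u.re*v.re + u.im*v.im)^2 ≤ Complex.normSq u * Complex.normSq v := by
  simp only [Complex.normSq_apply]
  nlinarith [sq_nonneg (u.re*v.im - u.im*v.re)]

lemma blk_nonneg {A B d nu nv ip : ℝ} (hA : 0 ≤ A) (hB : 0 ≤ B) (hd : d^2 ≤ 4*(A*B))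
    (hnu : 0 ≤ nu) (hnv : 0 ≤ nv) (hip : ip^2 ≤ nu*nv) : 0 ≤ A*nu + B*nv + d*ip := by
  have h4 : d^2 * ip^2 ≤ 4*(A*B)*(nu*nv) :=
    mul_le_mul hd hip (sq_nonneg ip) (by positivity)
  nlinarith [h4, sq_nonneg (A*nu - B*nv),
    add_nonneg (mul_nonneg hA hnu) (mul_nonneg hB hnv)]

/-- PPT criterion for Bell decomposable `2⊗3` states: the partial transpose of
`ρ` is positive semidefinite iff the three inequalities hold. -/
theorem bellDecomposable_ppt_iff (p : Fin 6 → ℝ) (hp : ∀ i, 0 ≤ p i)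
    (hsum : ∑ i, p i = 1) :
    (partialTranspose (ρBD p)).PosSemidef ↔
      ((p 0 + p 1) * (p 2 + p 3) ≥ (p 4 - p 5)^2 ∧
       (p 2 + p 3) * (p 4 + p 5) ≥ (p 0 - p 1)^2 ∧
       (p 4 + p 5) * (p 0 + p 1) ≥ (p 2 - p 3)^2) := by
  rw [posSemidef_iff_dotProduct_mulVec]
  constructor
  · rintro ⟨-, h⟩
    refine ⟨?_, ?_, ?_⟩
    · have key : ∀ t : ℝ, 0 ≤ (p 0 + p 1)/2 * (t*t) + (p 4 - p 5) * t + (p 2 + p 3)/2 := by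
        intro t
        have h0 := h (fun y => if y = ((0:Fin 2),(0:Fin 3)) then (t:ℂ)
          else if y = ((1:Fin 2),(2:Fin 3)) then 1 else 0)
        rw [quadR, Complex.zero_le_real] at h0
        norm_num [Prod.ext_iff, Fin.ext_iff, Complex.normSq_apply] at h0
        nlinarith [h0]
      have := discrim_le_zero key
      rw [discrim] at this; nlinarith [this]
    · have key : ∀ t : ℝ, 0 ≤ (p 2 + p 3)/2 * (t*t) + (p 0 - p 1) * t + (p 4 + p 5)/2 := by
        intro t
        have h0 := h (fun y => if y = ((0:Fin 2),(1:Fin 3)) then (t:ℂ)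
          else if y = ((1:Fin 2),(0:Fin 3)) then 1 else 0)
        rw [quadR, Complex.zero_le_real] at h0
        norm_num [Prod.ext_iff, Fin.ext_iff, Complex.normSq_apply] at h0
        nlinarith [h0]
      have := discrim_le_zero key
      rw [discrim] at this; nlinarith [this]
    · have key : ∀ t : ℝ, 0 ≤ (p 4 + p 5)/2 * (t*t) + (p 2 - p 3) * t + (p 0 + p 1)/2 := by
        intro t
        have h0 := h (fun y => if y = ((0:Fin 2),(2:Fin 3)) then (t:ℂ)
          else if y = ((1:Fin 2),(1:Fin 3)) then 1 else 0)
        rw [quadR, Complex.zero_le_real] at h0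
        norm_num [Prod.ext_iff, Fin.ext_iff, Complex.normSq_apply] at h0
        nlinarith [h0]
      have := discrim_le_zero key
      rw [discrim] at this; nlinarith [this]
  · rintro ⟨h1, h2, h3⟩
    refine ⟨pt_herm p, fun x => ?_⟩
    rw [quadR, Complex.zero_le_real]
    have b1 : 0 ≤ (p 0 + p 1)/2 * Complex.normSq (x (0,0)) + (p 2 + p 3)/2 * Complex.normSq (x (1,2))
        + (p 4 - p 5) * ((x (0,0)).re * (x (1,2)).re + (x (0,0)).im * (x (1,2)).im) :=
      blk_nonneg (by linarith [hp 0, hp 1]) (by linarith [hp 2, hp 3]) (by nlinarith [h1])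
        (Complex.normSq_nonneg _) (Complex.normSq_nonneg _) (ip_sq_le _ _)
    have b2 : 0 ≤ (p 2 + p 3)/2 * Complex.normSq (x (0,1)) + (p 4 + p 5)/2 * Complex.normSq (x (1,0))
        + (p 0 - p 1) * ((x (0,1)).re * (x (1,0)).re + (x (0,1)).im * (x (1,0)).im) :=
      blk_nonneg (by linarith [hp 2, hp 3]) (by linarith [hp 4, hp 5]) (by nlinarith [h2])
        (Complex.normSq_nonneg _) (Complex.normSq_nonneg _) (ip_sq_le _ _)
    have b3 : 0 ≤ (p 4 + p 5)/2 * Complex.normSq (x (0,2)) + (p 0 + p 1)/2 * Complex.normSq (x (1,1))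
        + (p 2 - p 3) * ((x (0,2)).re * (x (1,1)).re + (x (0,2)).im * (x (1,1)).im) :=
      blk_nonneg (by linarith [hp 4, hp 5]) (by linarith [hp 0, hp 1]) (by nlinarith [h3])
        (Complex.normSq_nonneg _) (Complex.normSq_nonneg _) (ip_sq_le _ _)
    linarith
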